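/- Let a1 > 1, a2 > 1, θ ∈ ℝ. Suppose (u, v) is a pair of nonnegative C² functions on ℝ satisfying u'' + θ u' + u(1 − u − a1 v) = 0 and v'' + θ v' + v(1 − a2 u − v) = 0 on ℝ, with (u, v)(x) → (1, 0) as x → −∞ and (u, v)(x) → (0, 1) as x → +∞. Then 4/(a1 + a2 + 2) ≤ u(x) + v(x) ≤ 1 for every x ∈ ℝ. -/

import Mathlib

open Filter Set Topology

lemma lv_exists_global_max (w : ℝ → ℝ) (hw : Continuous w) (x1 : ℝ)
    (hT : ∀ᶠ x in atTop, w x < w x1) (hB : ∀ᶠ x in atBot, w x < w x1) :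
    ∃ x0, ∀ x, w x ≤ w x0 := by
  obtain ⟨A, hA⟩ := eventually_atTop.mp hT
  obtain ⟨B, hB'⟩ := eventually_atBot.mp hB
  have hBx1 : B < x1 := by
    by_contra h; push_neg at h
    exact absurd (hB' x1 h) (lt_irrefl _)
  have hx1A : x1 < A := by
    by_contra h; push_neg at h
    exact absurd (hA x1 h) (lt_irrefl _)
  have hmem : x1 ∈ Icc B A := ⟨le_of_lt hBx1, le_of_lt hx1A⟩
  obtain ⟨x0, hx0mem, hx0max⟩ := isCompact_Icc.exists_isMaxOn ⟨x1, hmem⟩ hw.continuousOn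
  refine ⟨x0, fun x => ?_⟩
  by_cases hx : x ∈ Icc B A
  · exact hx0max hx
  · have hx1le : w x1 ≤ w x0 := hx0max hmem
    rcases not_and_or.mp hx with h | h
    · push_neg at h
      exact le_trans (le_of_lt (hB' x (le_of_lt h))) hx1le
    · push_neg at h
      exact le_trans (le_of_lt (hA x (le_of_lt h))) hx1le

lemma lv_exists_global_min (w : ℝ → ℝ) (hw : Continuous w) (x1 : ℝ)
    (hT : ∀ᶠ x in atTop, w x1 < w x) (hB : ∀ᶠ x in atBot, w x1 < w x) :
    ∃ x0, ∀ x, w x0 ≤ w x := by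
  obtain ⟨x0, h⟩ := lv_exists_global_max (fun x => -w x) hw.neg x1
    (hT.mono fun x hx => by simpa using hx) (hB.mono fun x hx => by simpa using hx)
  exact ⟨x0, fun x => by have := h x; simpa using this⟩

lemma deriv2_nonpos_of_localMax {f : ℝ → ℝ} (hfd : Differentiable ℝ f)
    (hfd' : Differentiable ℝ (deriv f)) {x0 : ℝ} (h : IsLocalMax f x0) :
    deriv (deriv f) x0 ≤ 0 := by
  by_contra hc
  push_neg at hc
  have hg0 : deriv f x0 = 0 := h.deriv_eq_zero
  have hg : HasDerivAt (deriv f) (deriv (deriv f) x0) x0 := (hfd' x0).hasDerivAt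
  have hslope : Tendsto (slope (deriv f) x0) (𝓝[≠] x0) (𝓝 (deriv (deriv f) x0)) :=
    hasDerivAt_iff_tendsto_slope.mp hg
  have hev : ∀ᶠ x in 𝓝[>] x0, 0 < slope (deriv f) x0 x := by
    have h1 : ∀ᶠ x in 𝓝[≠] x0, 0 < slope (deriv f) x0 x :=
      hslope.eventually (eventually_gt_nhds hc)
    exact nhdsWithin_mono x0 (fun x hx => ne_of_gt hx) h1
  rw [eventually_nhdsWithin_iff] at hev
  rcases Metric.eventually_nhds_iff.mp hev with ⟨δ, hδ, hball⟩
  rcases Metric.eventually_nhds_iff.mp (h : ∀ᶠ x in 𝓝 x0, f x ≤ f x0) with ⟨ε, hε, hmax⟩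
  set b := x0 + min δ ε / 2 with hb
  have hminpos : 0 < min δ ε := lt_min hδ hε
  have hb1 : x0 < b := by simp only [hb]; linarith
  have hgpos : ∀ ξ ∈ Ioo x0 b, 0 < deriv f ξ := by
    intro ξ hξ
    have h2 := hξ.2
    simp only [hb] at h2
    have hdist : dist ξ x0 < δ := by
      rw [Real.dist_eq, abs_of_pos (by linarith [hξ.1])]
      have : min δ ε ≤ δ := min_le_left _ _
      linarith
    have hsl := hball hdist hξ.1
    rw [slope_def_field, hg0, sub_zero] at hsl
    have hpos : 0 < ξ - x0 := by linarith [hξ.1]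
    rcases div_pos_iff.mp hsl with ⟨h1, _⟩ | ⟨_, h2'⟩
    · exact h1
    · linarith
  obtain ⟨ξ, hξ, hslope2⟩ := exists_deriv_eq_slope f hb1
    (hfd.continuous.continuousOn) (hfd.differentiableOn)
  have hq : 0 < (f b - f x0) / (b - x0) := hslope2 ▸ hgpos ξ hξ
  have hfb : f x0 < f b := by
    rcases div_pos_iff.mp hq with ⟨h1, _⟩ | ⟨_, h2⟩
    · linarith
    · linarith
  have hdb : dist b x0 < ε := by
    rw [Real.dist_eq, abs_of_pos (by linarith : (0:ℝ) < b - x0)]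
    have : min δ ε ≤ ε := min_le_right _ _
    simp only [hb]; linarith
  have := hmax hdb
  linarith

lemma deriv2_nonneg_of_localMin {f : ℝ → ℝ} (hfd : Differentiable ℝ f)
    (hfd' : Differentiable ℝ (deriv f)) {x0 : ℝ} (h : IsLocalMin f x0) :
    0 ≤ deriv (deriv f) x0 := by
  have hneg : deriv (fun x => -f x) = fun x => -deriv f x := by
    funext x; exact deriv.neg
  have h1 : deriv (deriv (fun x => -f x)) x0 ≤ 0 := by
    refine deriv2_nonpos_of_localMax (hfd.neg) ?_ (h.neg)
    show Differentiable ℝ (deriv (fun x => -f x)); rw [hneg]; exact hfd'.neg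
  rw [hneg] at h1
  have h2 : deriv (fun x => -deriv f x) x0 = -deriv (deriv f) x0 := deriv.neg
  rw [h2] at h1
  linarith

lemma zero_on_left (a1 θ : ℝ) (ha1 : 1 < a1) (u v : ℝ → ℝ)
    (hud : Differentiable ℝ u) (hud' : Differentiable ℝ (deriv u))
    (hu0 : ∀ x, 0 ≤ u x) (hu1 : ∀ x, u x ≤ 1)
    (hv0 : ∀ x, 0 ≤ v x) (hv1 : ∀ x, v x ≤ 1)
    (hequ : ∀ x, deriv (deriv u) x + θ * deriv u x + u x * (1 - u x - a1 * v x) = 0)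
    (x0 : ℝ) (h0 : u x0 = 0) (h0' : deriv u x0 = 0) :
    ∀ y ≤ x0, u y = 0 := by
  set K := |θ| + a1 + 1 with hK
  set g : ℝ → ℝ × ℝ := fun t => (u (x0 - t), deriv u (x0 - t)) with hg
  set g' : ℝ → ℝ × ℝ := fun t => (-(deriv u (x0 - t)), -(deriv (deriv u) (x0 - t))) with hg'
  have hcomp : ∀ t : ℝ, HasDerivAt g (g' t) t := by
    intro t
    have hlin : HasDerivAt (fun s : ℝ => x0 - s) (-1) t := (hasDerivAt_id t).const_sub x0
    have h1 : HasDerivAt (fun s => u (x0 - s)) (deriv u (x0 - t) * (-1)) t :=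
      (hud (x0 - t)).hasDerivAt.comp t hlin
    have h2 : HasDerivAt (fun s => deriv u (x0 - s)) (deriv (deriv u) (x0 - t) * (-1)) t :=
      (hud' (x0 - t)).hasDerivAt.comp t hlin
    have := h1.prodMk h2
    simpa [hg, hg', mul_comm] using this
  have hbound : ∀ t : ℝ, ‖g' t‖ ≤ K * ‖g t‖ := by
    intro t
    set z := x0 - t with hz
    have hu2 : deriv (deriv u) z = -(θ * deriv u z) - u z * (1 - u z - a1 * v z) := by
      linarith [hequ z]
    have habs1 : |u z * (1 - u z - a1 * v z)| ≤ a1 * |u z| := by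
      rw [abs_mul]
      have h3 : |1 - u z - a1 * v z| ≤ a1 := by
        rw [abs_le]
        constructor
        · nlinarith [hu1 z, hv1 z, hv0 z, hu0 z]
        · nlinarith [hu0 z, hv0 z]
      calc |u z| * |1 - u z - a1 * v z| ≤ |u z| * a1 :=
            mul_le_mul_of_nonneg_left h3 (abs_nonneg _)
        _ = a1 * |u z| := mul_comm _ _
    have hK1 : 1 ≤ K := by
      have := abs_nonneg θ; simp only [hK]; linarith
    have hnormg : ‖g t‖ = max |u z| |deriv u z| := by
      simp [hg, Prod.norm_def, Real.norm_eq_abs, hz]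
    have hnormg' : ‖g' t‖ = max |deriv u z| |deriv (deriv u) z| := by
      simp [hg', Prod.norm_def, Real.norm_eq_abs, hz]
    rw [hnormg, hnormg']
    set M := max |u z| |deriv u z| with hM
    have hM0 : 0 ≤ M := le_trans (abs_nonneg _) (le_max_left _ _)
    have hMu : |u z| ≤ M := le_max_left _ _
    have hMd : |deriv u z| ≤ M := le_max_right _ _
    have hle1 : |deriv u z| ≤ K * M := by nlinarith
    have hle2 : |deriv (deriv u) z| ≤ K * M := by
      have habs2 : |deriv (deriv u) z| ≤ |θ| * |deriv u z| + a1 * |u z| := by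
        rw [hu2, sub_eq_add_neg]
        calc |(-(θ * deriv u z)) + -(u z * (1 - u z - a1 * v z))|
            ≤ |(-(θ * deriv u z))| + |(-(u z * (1 - u z - a1 * v z)))| := abs_add_le _ _
          _ = |θ * deriv u z| + |u z * (1 - u z - a1 * v z)| := by rw [abs_neg, abs_neg]
          _ ≤ |θ| * |deriv u z| + a1 * |u z| := by rw [abs_mul]; linarith
      have h4 : |θ| * |deriv u z| ≤ |θ| * M := mul_le_mul_of_nonneg_left hMd (abs_nonneg _)
      have h5 : a1 * |u z| ≤ a1 * M := mul_le_mul_of_nonneg_left hMu (by linarith)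
      calc |deriv (deriv u) z| ≤ |θ| * M + a1 * M := by linarith
        _ ≤ K * M := by simp only [hK]; nlinarith
    exact max_le hle1 hle2
  intro y hy
  have hcont : Continuous g := by
    have hc1 : Continuous fun t : ℝ => x0 - t := continuous_const.sub continuous_id
    exact (hud.continuous.comp hc1).prodMk (hud'.continuous.comp hc1)
  have hkey := norm_le_gronwallBound_of_norm_deriv_right_le (f := g) (f' := g')
    (δ := 0) (K := K) (ε := 0) (a := 0) (b := x0 - y)
    hcont.continuousOn (fun t _ => (hcomp t).hasDerivWithinAt)
    (by simp [hg, h0, h0', Prod.norm_def])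
    (fun t _ => by simpa using hbound t)
  have hfin := hkey (x0 - y) ⟨by linarith, le_refl _⟩
  rw [gronwallBound_ε0_δ0] at hfin
  have hzero : g (x0 - y) = 0 := norm_le_zero_iff.mp (by simpa using hfin)
  have : u (x0 - (x0 - y)) = 0 := congrArg Prod.fst hzero
  simpa using this

/-- Sharper bounds for `u + v` in the scaled Lotka-Volterra system with
`d = k = 1` under the bistable condition. -/
theorem lv_sharper_bounds_u_plus_v
    (a1 a2 θ : ℝ) (ha1 : 1 < a1) (ha2 : 1 < a2)
    (u v : ℝ → ℝ)
    (hu : ContDiff ℝ 2 u) (hv : ContDiff ℝ 2 v)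
    (hu0 : ∀ x, 0 ≤ u x) (hv0 : ∀ x, 0 ≤ v x)
    (hequ : ∀ x, deriv (deriv u) x + θ * deriv u x
      + u x * (1 - u x - a1 * v x) = 0)
    (heqv : ∀ x, deriv (deriv v) x + θ * deriv v x
      + v x * (1 - a2 * u x - v x) = 0)
    (huM : Tendsto u atBot (nhds 1)) (hvM : Tendsto v atBot (nhds 0))
    (huP : Tendsto u atTop (nhds 0)) (hvP : Tendsto v atTop (nhds 1)) :
    ∀ x : ℝ, 4 / (a1 + a2 + 2) ≤ u x + v x ∧ u x + v x ≤ 1 := by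
  -- differentiability facts
  have hsplit : ∀ f : ℝ → ℝ, ContDiff ℝ 2 f → Differentiable ℝ f ∧ ContDiff ℝ 1 (deriv f) := by
    intro f hf
    have h2 : ContDiff ℝ ((1 : WithTop ℕ∞) + 1) f := hf.of_le (by norm_num)
    rw [contDiff_succ_iff_deriv] at h2
    exact ⟨h2.1, h2.2.2⟩
  obtain ⟨hud, hud1⟩ := hsplit u hu
  obtain ⟨hvd, hvd1⟩ := hsplit v hv
  have hud' : Differentiable ℝ (deriv u) := hud1.differentiable one_ne_zero
  have hvd' : Differentiable ℝ (deriv v) := hvd1.differentiable one_ne_zero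
  set w : ℝ → ℝ := fun x => u x + v x with hw
  have hwd : Differentiable ℝ w := hud.add hvd
  have hderiv : ∀ x, deriv w x = deriv u x + deriv v x := fun x => deriv_add (hud x) (hvd x)
  have hderivfun : deriv w = fun x => deriv u x + deriv v x := funext hderiv
  have hwd' : Differentiable ℝ (deriv w) := by
    rw [hderivfun]; exact hud'.add hvd'
  have hderiv2 : ∀ x, deriv (deriv w) x = deriv (deriv u) x + deriv (deriv v) x := by
    intro x; rw [hderivfun]; exact deriv_add (hud' x) (hvd' x)
  have hwT : Tendsto w atTop (𝓝 1) := by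
    have := huP.add hvP; simpa using this
  have hwB : Tendsto w atBot (𝓝 1) := by
    have := huM.add hvM; simpa using this
  -- upper bound
  have hupper : ∀ x, w x ≤ 1 := by
    by_contra h
    push_neg at h
    obtain ⟨x1, hx1⟩ := h
    obtain ⟨x0, hmax⟩ := lv_exists_global_max w hwd.continuous x1
      (hwT.eventually (eventually_lt_nhds hx1)) (hwB.eventually (eventually_lt_nhds hx1))
    have hloc : IsLocalMax w x0 := Filter.Eventually.of_forall fun x => hmax x
    have hd1 : deriv w x0 = 0 := hloc.deriv_eq_zero
    have hd2 : deriv (deriv w) x0 ≤ 0 := deriv2_nonpos_of_localMax hwd hwd' hloc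
    have heq := hderiv2 x0
    have h1 := hequ x0
    have h2 := heqv x0
    have hd1' : deriv u x0 + deriv v x0 = 0 := by rw [← hderiv]; exact hd1
    have hθ' : θ * deriv u x0 + θ * deriv v x0 = 0 := by
      have : θ * deriv u x0 + θ * deriv v x0 = θ * (deriv u x0 + deriv v x0) := by ring
      rw [this, hd1', mul_zero]
    have hsum : 0 ≤ u x0 * (1 - u x0 - a1 * v x0) + v x0 * (1 - a2 * u x0 - v x0) := by
      linarith [hd2, heq, h1, h2]
    have hS : w x1 ≤ w x0 := hmax x1
    simp only [hw] at hS hx1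
    nlinarith [mul_nonneg (hu0 x0) (hv0 x0), hsum, hS, hx1]
  have hu1 : ∀ x, u x ≤ 1 := fun x => by have := hupper x; have := hv0 x; simp only [hw] at *; linarith
  have hv1 : ∀ x, v x ≤ 1 := fun x => by have := hupper x; have := hu0 x; simp only [hw] at *; linarith
  -- lower bound
  have hlower : ∀ x, 4 / (a1 + a2 + 2) ≤ w x := by
    by_contra h
    push_neg at h
    obtain ⟨x1, hx1⟩ := h
    have hc2 : (0:ℝ) < a1 + a2 + 2 := by linarith
    have hm1 : 4 / (a1 + a2 + 2) < 1 := by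
      rw [div_lt_one hc2]; linarith
    have hx1lt1 : w x1 < 1 := lt_trans hx1 hm1
    obtain ⟨x0, hmin⟩ := lv_exists_global_min w hwd.continuous x1
      (hwT.eventually (eventually_gt_nhds hx1lt1)) (hwB.eventually (eventually_gt_nhds hx1lt1))
    have hloc : IsLocalMin w x0 := Filter.Eventually.of_forall fun x => hmin x
    have hd1 : deriv w x0 = 0 := hloc.deriv_eq_zero
    have hd2 : 0 ≤ deriv (deriv w) x0 := deriv2_nonneg_of_localMin hwd hwd' hloc
    have heq := hderiv2 x0
    have h1 := hequ x0
    have h2 := heqv x0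
    have hd1' : deriv u x0 + deriv v x0 = 0 := by rw [← hderiv]; exact hd1
    have hθ' : θ * deriv u x0 + θ * deriv v x0 = 0 := by
      have : θ * deriv u x0 + θ * deriv v x0 = θ * (deriv u x0 + deriv v x0) := by ring
      rw [this, hd1', mul_zero]
    have hsum : u x0 * (1 - u x0 - a1 * v x0) + v x0 * (1 - a2 * u x0 - v x0) ≤ 0 := by
      linarith [hd2, heq, h1, h2]
    rcases eq_or_lt_of_le (by have := hu0 x0; have := hv0 x0; simp only [hw]; linarith :
        (0:ℝ) ≤ w x0) with hzero | hpos
    · -- w x0 = 0 : use uniqueness to get contradiction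
      have hu00 : u x0 = 0 := by
        have := hv0 x0; have := hu0 x0; simp only [hw] at hzero; linarith
      have hulocmin : IsLocalMin u x0 := Filter.Eventually.of_forall fun x => by
        rw [hu00]; exact hu0 x
      have hud0 : deriv u x0 = 0 := hulocmin.deriv_eq_zero
      have hzleft := zero_on_left a1 θ ha1 u v hud hud' hu0 hu1 hv0 hv1 hequ x0 hu00 hud0
      have hev : ∀ᶠ x in atBot, (0:ℝ) < u x :=
        huM.eventually (eventually_gt_nhds (by norm_num : (0:ℝ) < 1))
      obtain ⟨B, hB⟩ := eventually_atBot.mp hev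
      have hy1 : u (min B x0) = 0 := hzleft _ (min_le_right _ _)
      have hy2 : 0 < u (min B x0) := hB _ (min_le_left _ _)
      linarith
    · -- w x0 > 0
      have hminx1 : w x0 ≤ w x1 := hmin x1
      simp only [hw] at hminx1 hx1 hpos
      have hx1' : w x1 * (a1 + a2 + 2) < 4 := (lt_div_iff₀ hc2).mp hx1
      have h4 : (u x0 + v x0) * (a1 + a2 + 2) < 4 :=
        lt_of_le_of_lt (mul_le_mul_of_nonneg_right hminx1 (le_of_lt hc2)) hx1'
      have ha12 : (0:ℝ) ≤ a1 + a2 - 2 := by linarith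
      have hq1 : (u x0 + v x0)^2/4 - u x0 * v x0 ≥ 0 := by nlinarith [sq_nonneg (u x0 - v x0)]
      have hq2 : (u x0 + v x0) ≤ (a1 + a2 + 2)/4 * (u x0 + v x0)^2 := by
        nlinarith [hsum, mul_nonneg ha12 hq1]
      have h5 : (u x0 + v x0) * (a1 + a2 + 2) * (u x0 + v x0) < 4 * (u x0 + v x0) :=
        mul_lt_mul_of_pos_right h4 hpos
      nlinarith [hq2, h5]
  intro x
  exact ⟨hlower x, hupper x⟩
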